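/- Let a_n = (2·n!·∏_{j=1}^n ((p+1)^j + 1))^{−1} and b_n = (n!·∏_{j=1}^n (p^j − 1))^{−1}, and set S_p(x) = Σ_{n≥0} a_n x^n and T_p(x) = Σ_{n≥0} b_n x^n. Then for all nonnegative integers d one has S_p(d) ≤ r_p(d,d) ≤ T_p(d). -/

import Mathlib

/-- `r_p(M,d)`: the number of finitely supported nonincreasing sequences `m` of nonnegative
integers with `m 0 ≤ d` and `Σ m_i p^i = M`. -/
noncomputable def rp (p : ℤ) (M d : ℤ) : ℕ :=
  {m : ℕ →₀ ℤ | (∀ i, 0 ≤ m i) ∧ (∀ i, m (i + 1) ≤ m i) ∧ m 0 ≤ d ∧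
    (m.sum fun i a => a * p ^ i) = M}.ncard

/-- `a_n = (2·n!·∏_{j=1}^n ((p+1)^j + 1))⁻¹`. -/
noncomputable def aCoef (p : ℕ) (n : ℕ) : ℝ :=
  1 / (2 * n.factorial * ∏ j ∈ Finset.Icc 1 n, (((p : ℝ) + 1) ^ j + 1))

/-- `b_n = (n!·∏_{j=1}^n (p^j − 1))⁻¹`. -/
noncomputable def bCoef (p : ℕ) (n : ℕ) : ℝ :=
  1 / (n.factorial * ∏ j ∈ Finset.Icc 1 n, ((p : ℝ) ^ j - 1))

/-- `S_p(x) = Σ a_n x^n`. -/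
noncomputable def Sp (p : ℕ) (x : ℝ) : ℝ := ∑' n : ℕ, aCoef p n * x ^ n

/-- `T_p(x) = Σ b_n x^n`. -/
noncomputable def Tp (p : ℕ) (x : ℝ) : ℝ := ∑' n : ℕ, bCoef p n * x ^ n

namespace Stmt8


def SS (p M d : ℕ) : Set (ℕ →₀ ℤ) :=
  {m : ℕ →₀ ℤ | (∀ i, 0 ≤ m i) ∧ (∀ i, m (i + 1) ≤ m i) ∧ m 0 ≤ (d : ℤ) ∧
    (m.sum fun i a => a * (p : ℤ) ^ i) = (M : ℤ)}

lemma rp_eq (p M d : ℕ) : rp (p : ℤ) (M : ℤ) (d : ℤ) = (SS p M d).ncard := rfl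

/-- tail of a finsupp sequence -/
noncomputable def tail (m : ℕ →₀ ℤ) : ℕ →₀ ℤ :=
  Finsupp.comapDomain Nat.succ m (Nat.succ_injective.injOn)

@[simp] lemma tail_apply (m : ℕ →₀ ℤ) (i : ℕ) : tail m i = m (i + 1) :=
  Finsupp.comapDomain_apply _ _ _ _

noncomputable def up (k : ℤ) (m : ℕ →₀ ℤ) : ℕ →₀ ℤ :=
  Finsupp.single 0 k + Finsupp.embDomain ⟨Nat.succ, Nat.succ_injective⟩ m

@[simp] lemma up_apply_zero (k : ℤ) (m : ℕ →₀ ℤ) : up k m 0 = k := by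
  have h0 : (0 : ℕ) ∉ Set.range (⟨Nat.succ, Nat.succ_injective⟩ : ℕ ↪ ℕ) := by
    rintro ⟨j, hj⟩; exact Nat.succ_ne_zero j hj
  simp [up, Finsupp.embDomain_notin_range _ _ _ h0]

@[simp] lemma up_apply_succ (k : ℤ) (m : ℕ →₀ ℤ) (i : ℕ) : up k m (i + 1) = m i := by
  have : Finsupp.embDomain (⟨Nat.succ, Nat.succ_injective⟩ : ℕ ↪ ℕ) m (i + 1) = m i :=
    Finsupp.embDomain_apply_self _ m i
  simp [up, this, Finsupp.single_apply]

@[simp] lemma tail_up (k : ℤ) (m : ℕ →₀ ℤ) : tail (up k m) = m := by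
  ext i; simp

lemma sum_shift (p : ℕ) (g : ℕ →₀ ℤ) :
    (g.sum fun i a => a * (p : ℤ) ^ i) =
      g 0 + p * ((tail g).sum fun i a => a * (p : ℤ) ^ i) := by
  set L := g.support.sup id with hL
  have h1 : g.support ⊆ Finset.range (L + 1) := by
    intro i hi
    simp only [Finset.mem_range]
    exact Nat.lt_succ_of_le (Finset.le_sup (f := id) hi)
  have h2 : (tail g).support ⊆ Finset.range L := by
    intro i hi
    have : g (i + 1) ≠ 0 := by
      have := Finsupp.mem_support_iff.mp hi; simpa using this
    have : i + 1 ∈ g.support := Finsupp.mem_support_iff.mpr this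
    have := Finset.le_sup (f := id) this
    simp only [id] at this
    simp only [Finset.mem_range]; omega
  rw [Finsupp.sum_of_support_subset g h1 _ (by intro i _; ring),
    Finsupp.sum_of_support_subset _ h2 _ (by intro i _; ring),
    Finset.sum_range_succ']
  simp only [tail_apply, pow_zero, mul_one, pow_succ, Finset.mul_sum]
  rw [add_comm]
  congr 1
  exact Finset.sum_congr rfl fun i _ => by ring

lemma term_le (p : ℕ) (g : ℕ →₀ ℤ) (hg : ∀ i, 0 ≤ g i) (i : ℕ) :
    g i * (p : ℤ) ^ i ≤ g.sum fun j a => a * (p : ℤ) ^ j := by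
  have hnn : ∀ j ∈ g.support, 0 ≤ g j * (p : ℤ) ^ j := fun j _ =>
    mul_nonneg (hg j) (pow_nonneg (by positivity) _)
  by_cases h : i ∈ g.support
  · exact Finset.single_le_sum hnn h
  · have : g i = 0 := Finsupp.notMem_support_iff.mp h
    rw [this, zero_mul]
    exact Finset.sum_nonneg hnn

lemma sum_nonneg' (p : ℕ) (g : ℕ →₀ ℤ) (hg : ∀ i, 0 ≤ g i) :
    0 ≤ g.sum fun j a => a * (p : ℤ) ^ j :=
  Finset.sum_nonneg fun j _ => mul_nonneg (hg j) (pow_nonneg (by positivity) _)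

lemma apply_le (p M d : ℕ) (hp : 1 ≤ p) {m : ℕ →₀ ℤ} (hm : m ∈ SS p M d) (i : ℕ) :
    m i ≤ (M : ℤ) := by
  obtain ⟨h1, _, _, h4⟩ := hm
  have := term_le p m h1 i
  rw [h4] at this
  have hpow : (1 : ℤ) ≤ (p : ℤ) ^ i := one_le_pow₀ (by exact_mod_cast hp)
  nlinarith [h1 i]

lemma apply_eq_zero (p M d : ℕ) (hp : 2 ≤ p) {m : ℕ →₀ ℤ} (hm : m ∈ SS p M d)
    {i : ℕ} (hi : M ≤ i) : m i = 0 := by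
  obtain ⟨h1, _, _, h4⟩ := hm
  by_contra h
  have hpos : 1 ≤ m i := lt_of_le_of_ne (h1 i) (Ne.symm h) 
  have hterm := term_le p m h1 i
  rw [h4] at hterm
  have hpow : ((p : ℤ)) ^ i ≤ m i * (p : ℤ) ^ i := le_mul_of_one_le_left (by positivity) hpos
  have hip : (i : ℤ) < (p : ℤ) ^ i := by exact_mod_cast Nat.lt_pow_self (n := i) (a := p) (by omega)
  have : (M : ℤ) ≤ (i : ℤ) := by exact_mod_cast hi
  linarith

lemma finite_SS (p : ℕ) (hp : 2 ≤ p) (M d : ℕ) : (SS p M d).Finite := by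
  have : Finite ↥(Set.Icc (0 : ℤ) M) := (Set.finite_Icc _ _).to_subtype
  rw [← Set.finite_coe_iff]
  have hinj : Function.Injective (fun (m : ↥(SS p M d)) (i : Fin M) =>
      (⟨m.1 i, (m.2.1 i), apply_le p M d (by omega) m.2 i⟩ : ↥(Set.Icc (0 : ℤ) M))) := by
    intro m m' h
    ext i
    by_cases hi : i < M
    · exact congrArg Subtype.val (congrFun h ⟨i, hi⟩)
    · rw [apply_eq_zero p M d hp m.2 (by omega), apply_eq_zero p M d hp m'.2 (by omega)]
  exact Finite.of_injective _ hinj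

lemma ncard_SS_zero (p : ℕ) (hp : 2 ≤ p) : (SS p 0 0).ncard = 1 := by
  have : SS p 0 0 = {0} := by
    apply Set.eq_singleton_iff_unique_mem.mpr
    constructor
    · refine ⟨fun i => le_rfl, fun i => le_rfl, le_rfl, ?_⟩
      simp [Finsupp.sum_zero_index]
    · rintro m ⟨h1, _, _, h4⟩
      ext i
      have hterm := term_le p m h1 i
      rw [h4] at hterm
      have hpow : (0:ℤ) < (p : ℤ) ^ i := pow_pos (by exact_mod_cast (by omega : 0 < p)) i
      simp only [Finsupp.coe_zero, Pi.zero_apply]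
      by_contra h
      have hpos : 0 < m i := lt_of_le_of_ne (h1 i) (Ne.symm h)
      have := mul_pos hpos hpow
      norm_num at hterm
      linarith
  rw [this, Set.ncard_singleton]

lemma one_le_ncard_SS (p : ℕ) (hp : 2 ≤ p) (N : ℕ) : 1 ≤ (SS p N N).ncard := by
  have hmem : Finsupp.single 0 (N : ℤ) ∈ SS p N N := by
    refine ⟨fun i => ?_, fun i => ?_, ?_, ?_⟩
    · rw [Finsupp.single_apply]; split <;> simp
    · rw [Finsupp.single_apply, Finsupp.single_apply]
      split
      · omega
      · split <;> simp
    · simp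
    · rw [Finsupp.sum_single_index (by ring)]; simp
  have := (Set.ncard_pos (finite_SS p hp N N)).mpr ⟨_, hmem⟩
  omega


lemma card_sigma_eq (p : ℕ) (hp : 2 ≤ p) (K : ℕ) :
    Nat.card (Σ N : Fin (K + 1), ↥(SS p (N : ℕ) (N : ℕ))) =
      ∑ N ∈ Finset.range (K + 1), (SS p N N).ncard := by
  haveI : ∀ N : Fin (K + 1), Fintype ↥(SS p (N : ℕ) (N : ℕ)) :=
    fun N => (finite_SS p hp _ _).fintype
  rw [Nat.card_eq_fintype_card, Fintype.card_sigma, ← Fin.sum_univ_eq_sum_range]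
  exact Finset.sum_congr rfl fun N _ => by
    rw [← Nat.card_coe_set_eq, Nat.card_eq_fintype_card]

lemma C1 (p : ℕ) (hp : 2 ≤ p) (d : ℕ) :
    ∑ N ∈ Finset.range (d / (p + 1) + 1), (SS p N N).ncard ≤ (SS p d d).ncard := by
  set K := d / (p + 1) with hK
  haveI : Finite ↥(SS p d d) := (finite_SS p hp d d).to_subtype
  have hmem : ∀ (N : Fin (K + 1)) (m : ↥(SS p (N : ℕ) (N : ℕ))),
      up ((d : ℤ) - p * N) m.1 ∈ SS p d d := by
    rintro ⟨N, hNlt⟩ ⟨m, hm1, hm2, hm3, hm4⟩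
    have hNK : N ≤ K := Nat.lt_succ_iff.mp hNlt
    have hNd : N * (p + 1) ≤ d := (Nat.le_div_iff_mul_le (by omega)).mp (hK ▸ hNK)
    have hNdZ : (N : ℤ) * (p + 1) ≤ (d : ℤ) := by exact_mod_cast hNd
    refine ⟨fun i => ?_, fun i => ?_, ?_, ?_⟩
    · cases i with
      | zero => rw [up_apply_zero]; push_cast; nlinarith [hm1 0]
      | succ i => rw [up_apply_succ]; exact hm1 i
    · rw [up_apply_succ]
      cases i with
      | zero =>
        rw [up_apply_zero]
        have : m 0 ≤ (N : ℤ) := hm3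
        linarith
      | succ j => rw [up_apply_succ]; exact hm2 j
    · rw [up_apply_zero]
      have : (0:ℤ) ≤ (p : ℤ) * N := by positivity
      linarith
    · rw [sum_shift p, tail_up, up_apply_zero, hm4]
      ring
  set F : (Σ N : Fin (K + 1), ↥(SS p (N : ℕ) (N : ℕ))) → ↥(SS p d d) :=
    fun x => ⟨up ((d : ℤ) - p * x.1) x.2.1, hmem x.1 x.2⟩ with hF
  have hFinj : Function.Injective F := by
    rintro ⟨N, m, hm⟩ ⟨N', m', hm'⟩ h
    have hval : up ((d : ℤ) - p * N) m = up ((d : ℤ) - p * N') m' :=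
      congrArg Subtype.val h
    have hmm : m = m' := by
      rw [← tail_up ((d : ℤ) - p * N) m, hval, tail_up]
    have hNN : N = N' := by
      have h1 := hm.2.2.2
      have h2 := hm'.2.2.2
      rw [hmm] at h1
      rw [h1] at h2
      exact Fin.ext (by exact_mod_cast h2)
    subst hNN
    subst hmm
    rfl
  calc ∑ N ∈ Finset.range (K + 1), (SS p N N).ncard
      = Nat.card (Σ N : Fin (K + 1), ↥(SS p (N : ℕ) (N : ℕ))) :=
        (card_sigma_eq p hp K).symm
    _ ≤ Nat.card ↥(SS p d d) := Nat.card_le_card_of_injective F hFinj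
    _ = (SS p d d).ncard := Nat.card_coe_set_eq _

lemma C2 (p : ℕ) (hp : 2 ≤ p) (d : ℕ) :
    (SS p d d).ncard ≤ ∑ N ∈ Finset.range (d / p + 1), (SS p N N).ncard := by
  set K := d / p with hK
  haveI : ∀ N : Fin (K + 1), Finite ↥(SS p (N : ℕ) (N : ℕ)) :=
    fun N => (finite_SS p hp _ _).to_subtype
  have key : ∀ m : ↥(SS p d d), ∃ N : Fin (K + 1), tail m.1 ∈ SS p (N : ℕ) (N : ℕ) := by
    rintro ⟨m, hm1, hm2, hm3, hm4⟩
    set s := ((tail m).sum fun i a => a * (p : ℤ) ^ i) with hs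
    have htail_nonneg : ∀ i, 0 ≤ tail m i := fun i => by rw [tail_apply]; exact hm1 (i + 1)
    have hs0 : 0 ≤ s := sum_nonneg' p _ htail_nonneg
    have hshift : (d : ℤ) = m 0 + p * s := by rw [← hm4, sum_shift p m]
    have hsd : (p : ℤ) * s ≤ d := by linarith [hm1 0]
    set N : ℕ := s.toNat with hN
    have hNs : (N : ℤ) = s := Int.toNat_of_nonneg hs0
    have hNK : N < K + 1 := by
      have hpN : (p : ℤ) * N ≤ d := by rw [hNs]; exact hsd
      have h1 : p * N ≤ d := by exact_mod_cast hpN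
      have h2 : N ≤ K := (Nat.le_div_iff_mul_le (by omega)).mpr (by rwa [Nat.mul_comm])
      omega
    refine ⟨⟨N, hNK⟩, htail_nonneg, fun i => ?_, ?_, ?_⟩
    · rw [tail_apply, tail_apply]; exact hm2 (i + 1)
    · have := term_le p (tail m) htail_nonneg 0
      rw [pow_zero, mul_one] at this
      rw [← hs] at this
      simpa [hNs] using this
    · simpa using hNs.symm
  set G : ↥(SS p d d) → Σ N : Fin (K + 1), ↥(SS p (N : ℕ) (N : ℕ)) :=
    fun m => ⟨(key m).choose, ⟨tail m.1, (key m).choose_spec⟩⟩ with hG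
  have hGinj : Function.Injective G := by
    intro m m' h
    have h2 : tail m.1 = tail m'.1 := congrArg (fun x => x.2.1) h
    have hsum : ((tail m.1).sum fun i a => a * (p : ℤ) ^ i) =
        ((tail m'.1).sum fun i a => a * (p : ℤ) ^ i) := by rw [h2]
    have e1 : (d : ℤ) = m.1 0 + p * ((tail m.1).sum fun i a => a * (p : ℤ) ^ i) := by
      rw [← m.2.2.2.2, sum_shift p]
    have e2 : (d : ℤ) = m'.1 0 + p * ((tail m'.1).sum fun i a => a * (p : ℤ) ^ i) := by
      rw [← m'.2.2.2.2, sum_shift p]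
    apply Subtype.ext
    ext i
    cases i with
    | zero => rw [hsum] at e1; linarith
    | succ i =>
      have := DFunLike.congr_fun h2 i
      rwa [tail_apply, tail_apply] at this
  calc (SS p d d).ncard = Nat.card ↥(SS p d d) := (Nat.card_coe_set_eq _).symm
    _ ≤ Nat.card (Σ N : Fin (K + 1), ↥(SS p (N : ℕ) (N : ℕ))) :=
        Nat.card_le_card_of_injective G hGinj
    _ = ∑ N ∈ Finset.range (K + 1), (SS p N N).ncard := card_sigma_eq p hp K



variable {p : ℕ}

lemma one_le_prod_real {s : Finset ℕ} {f : ℕ → ℝ} (h : ∀ j ∈ s, 1 ≤ f j) :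
    1 ≤ ∏ j ∈ s, f j := by
  calc (1:ℝ) = ∏ _j ∈ s, (1:ℝ) := by simp
    _ ≤ ∏ j ∈ s, f j := Finset.prod_le_prod (by intros; norm_num) h

lemma aProd_pos (p n : ℕ) : 0 < ∏ j ∈ Finset.Icc 1 n, (((p : ℝ) + 1) ^ j + 1) :=
  Finset.prod_pos fun j _ => by positivity

lemma bProd_pos (hp : 2 ≤ p) (n : ℕ) : 0 < ∏ j ∈ Finset.Icc 1 n, ((p : ℝ) ^ j - 1) := by
  apply Finset.prod_pos
  intro j hj
  have hj1 : 1 ≤ j := (Finset.mem_Icc.mp hj).1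
  have : (2 : ℝ) ≤ (p : ℝ) := by exact_mod_cast hp
  have h1 : (2 : ℝ) ≤ (p : ℝ) ^ j :=
    le_trans this (le_self_pow₀ (by linarith) (by omega))
  linarith

lemma aCoef_pos (p n : ℕ) : 0 < aCoef p n := by
  have h1 := aProd_pos p n
  have h2 : (0:ℝ) < n.factorial := by exact_mod_cast n.factorial_pos
  rw [aCoef]; positivity

lemma bCoef_pos (hp : 2 ≤ p) (n : ℕ) : 0 < bCoef p n := by
  have h1 := bProd_pos hp n
  have h2 : (0:ℝ) < n.factorial := by exact_mod_cast n.factorial_pos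
  rw [bCoef]; positivity

lemma aCoef_le (p n : ℕ) : aCoef p n ≤ 1 / n.factorial := by
  rw [aCoef]
  apply one_div_le_one_div_of_le (by exact_mod_cast n.factorial_pos)
  have h1 : (1:ℝ) ≤ ∏ j ∈ Finset.Icc 1 n, (((p : ℝ) + 1) ^ j + 1) :=
    one_le_prod_real (fun j _ => by nlinarith [pow_nonneg (by positivity : (0:ℝ) ≤ (p:ℝ)+1) j])
  have h2 : (0:ℝ) < n.factorial := by exact_mod_cast n.factorial_pos
  nlinarith

lemma bCoef_le (hp : 2 ≤ p) (n : ℕ) : bCoef p n ≤ 1 / n.factorial := by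
  rw [bCoef]
  apply one_div_le_one_div_of_le (by exact_mod_cast n.factorial_pos)
  have h1 : (1:ℝ) ≤ ∏ j ∈ Finset.Icc 1 n, ((p : ℝ) ^ j - 1) := by
    apply one_le_prod_real
    intro j hj
    have hj1 : 1 ≤ j := (Finset.mem_Icc.mp hj).1
    have h2 : (2 : ℝ) ≤ (p : ℝ) := by exact_mod_cast hp
    have : (2 : ℝ) ≤ (p : ℝ) ^ j := le_trans h2 (le_self_pow₀ (by linarith) (by omega))
    linarith
  have h2 : (0:ℝ) < n.factorial := by exact_mod_cast n.factorial_pos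
  nlinarith

lemma summable_a (p : ℕ) {x : ℝ} (hx : 0 ≤ x) : Summable fun n => aCoef p n * x ^ n := by
  apply Summable.of_nonneg_of_le
    (fun n => mul_nonneg (aCoef_pos p n).le (by positivity))
    (fun n => ?_) (Real.summable_pow_div_factorial x)
  calc aCoef p n * x ^ n ≤ (1 / n.factorial) * x ^ n :=
        mul_le_mul_of_nonneg_right (aCoef_le p n) (by positivity)
    _ = x ^ n / n.factorial := by ring

lemma summable_b (hp : 2 ≤ p) {x : ℝ} (hx : 0 ≤ x) : Summable fun n => bCoef p n * x ^ n := by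
  apply Summable.of_nonneg_of_le
    (fun n => mul_nonneg (bCoef_pos hp n).le (by positivity))
    (fun n => ?_) (Real.summable_pow_div_factorial x)
  calc bCoef p n * x ^ n ≤ (1 / n.factorial) * x ^ n :=
        mul_le_mul_of_nonneg_right (bCoef_le hp n) (by positivity)
    _ = x ^ n / n.factorial := by ring

lemma summable_a_succ (p : ℕ) {y : ℝ} (hy : 0 ≤ y) :
    Summable fun n => aCoef p (n + 1) * y ^ (n + 1) :=
  (summable_nat_add_iff 1).2 (summable_a p hy)

lemma summable_b_succ (hp : 2 ≤ p) {y : ℝ} (hy : 0 ≤ y) :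
    Summable fun n => bCoef p (n + 1) * y ^ (n + 1) :=
  (summable_nat_add_iff 1).2 (summable_b hp hy)

lemma summable_aI (p : ℕ) {x : ℝ} (hx : 0 ≤ x) :
    Summable fun n => aCoef p n * x ^ (n + 1) / ((n : ℝ) + 1) := by
  apply Summable.of_nonneg_of_le
    (fun n => div_nonneg (mul_nonneg (aCoef_pos p n).le (pow_nonneg hx _)) (by positivity))
    (fun n => ?_) ((summable_a p hx).mul_left x)
  calc aCoef p n * x ^ (n + 1) / ((n : ℝ) + 1) ≤ aCoef p n * x ^ (n + 1) := by
        apply div_le_self (mul_nonneg (aCoef_pos p n).le (pow_nonneg hx _)) (by norm_num)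
    _ = x * (aCoef p n * x ^ n) := by ring

lemma summable_bI (hp : 2 ≤ p) {x : ℝ} (hx : 0 ≤ x) :
    Summable fun n => bCoef p n * x ^ (n + 1) / ((n : ℝ) + 1) := by
  apply Summable.of_nonneg_of_le
    (fun n => div_nonneg (mul_nonneg (bCoef_pos hp n).le (pow_nonneg hx _)) (by positivity))
    (fun n => ?_) ((summable_b hp hx).mul_left x)
  calc bCoef p n * x ^ (n + 1) / ((n : ℝ) + 1) ≤ bCoef p n * x ^ (n + 1) := by
        apply div_le_self (mul_nonneg (bCoef_pos hp n).le (by positivity)) (by norm_num)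
    _ = x * (bCoef p n * x ^ n) := by ring

lemma a_term (p n : ℕ) (x : ℝ) :
    aCoef p n * x ^ (n + 1) / ((n : ℝ) + 1) =
      aCoef p (n + 1) * (((p : ℝ) + 1) * x) ^ (n + 1) + aCoef p (n + 1) * x ^ (n + 1) := by
  have h1 : ((n : ℝ) + 1) ≠ 0 := by positivity
  have h2 : (0:ℝ) < ∏ j ∈ Finset.Icc 1 n, (((p : ℝ) + 1) ^ j + 1) := aProd_pos p n
  have h3 : (0:ℝ) < (n.factorial : ℝ) := by exact_mod_cast n.factorial_pos
  have h4 : (0:ℝ) < ((p : ℝ) + 1) ^ (n + 1) + 1 := by positivity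
  rw [aCoef, aCoef, Finset.prod_Icc_succ_top (by omega), Nat.factorial_succ, mul_pow]
  push_cast
  field_simp

lemma b_term (hp : 2 ≤ p) (n : ℕ) (x : ℝ) :
    bCoef p n * x ^ (n + 1) / ((n : ℝ) + 1) =
      bCoef p (n + 1) * ((p : ℝ) * x) ^ (n + 1) - bCoef p (n + 1) * x ^ (n + 1) := by
  have h1 : ((n : ℝ) + 1) ≠ 0 := by positivity
  have h2 : (0:ℝ) < ∏ j ∈ Finset.Icc 1 n, ((p : ℝ) ^ j - 1) := bProd_pos hp n
  have h3 : (0:ℝ) < (n.factorial : ℝ) := by exact_mod_cast n.factorial_pos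
  have h4 : (0:ℝ) < (p : ℝ) ^ (n + 1) - 1 := by
    have hpr : (2:ℝ) ≤ (p:ℝ) := by exact_mod_cast hp
    have : (2:ℝ) ≤ (p:ℝ) ^ (n+1) := le_trans hpr (le_self_pow₀ (by linarith) (by omega))
    linarith
  rw [bCoef, bCoef, Finset.prod_Icc_succ_top (by omega), Nat.factorial_succ, mul_pow]
  push_cast
  field_simp

lemma aCoef_zero (p : ℕ) : aCoef p 0 = 1 / 2 := by simp [aCoef]

lemma bCoef_zero (p : ℕ) : bCoef p 0 = 1 := by simp [bCoef]

lemma Sp_eq (p : ℕ) {x : ℝ} (hx : 0 ≤ x) :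
    Sp p (((p : ℝ) + 1) * x) =
      1 - Sp p x + ∑' n : ℕ, aCoef p n * x ^ (n + 1) / ((n : ℝ) + 1) := by
  have hpx : 0 ≤ ((p : ℝ) + 1) * x := by positivity
  have e1 : Sp p (((p : ℝ) + 1) * x) =
      1 / 2 + ∑' n : ℕ, aCoef p (n + 1) * (((p : ℝ) + 1) * x) ^ (n + 1) := by
    rw [Sp, Summable.tsum_eq_zero_add (summable_a p hpx)]
    simp [aCoef_zero]
  have e2 : Sp p x = 1 / 2 + ∑' n : ℕ, aCoef p (n + 1) * x ^ (n + 1) := by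
    rw [Sp, Summable.tsum_eq_zero_add (summable_a p hx)]
    simp [aCoef_zero]
  have e3 : (∑' n : ℕ, aCoef p n * x ^ (n + 1) / ((n : ℝ) + 1)) =
      (∑' n : ℕ, aCoef p (n + 1) * (((p : ℝ) + 1) * x) ^ (n + 1)) +
        ∑' n : ℕ, aCoef p (n + 1) * x ^ (n + 1) := by
    rw [← Summable.tsum_add (summable_a_succ p hpx) (summable_a_succ p hx)]
    exact tsum_congr fun n => a_term p n x
  rw [e1, e2, e3]
  ring

lemma Tp_eq (hp : 2 ≤ p) {x : ℝ} (hx : 0 ≤ x) :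
    Tp p ((p : ℝ) * x) = Tp p x + ∑' n : ℕ, bCoef p n * x ^ (n + 1) / ((n : ℝ) + 1) := by
  have hpx : 0 ≤ (p : ℝ) * x := by positivity
  have e1 : Tp p ((p : ℝ) * x) =
      1 + ∑' n : ℕ, bCoef p (n + 1) * ((p : ℝ) * x) ^ (n + 1) := by
    rw [Tp, Summable.tsum_eq_zero_add (summable_b hp hpx)]
    simp [bCoef_zero]
  have e2 : Tp p x = 1 + ∑' n : ℕ, bCoef p (n + 1) * x ^ (n + 1) := by
    rw [Tp, Summable.tsum_eq_zero_add (summable_b hp hx)]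
    simp [bCoef_zero]
  have e3 : (∑' n : ℕ, bCoef p n * x ^ (n + 1) / ((n : ℝ) + 1)) =
      (∑' n : ℕ, bCoef p (n + 1) * ((p : ℝ) * x) ^ (n + 1)) -
        ∑' n : ℕ, bCoef p (n + 1) * x ^ (n + 1) := by
    rw [← Summable.tsum_sub (summable_b_succ hp hpx) (summable_b_succ hp hx)]
    exact tsum_congr fun n => b_term hp n x
  rw [e1, e2, e3]
  ring

lemma Sp_nonneg (p : ℕ) {x : ℝ} (hx : 0 ≤ x) : 0 ≤ Sp p x :=
  tsum_nonneg fun n => mul_nonneg (aCoef_pos p n).le (pow_nonneg hx n)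

lemma Sp_mono (p : ℕ) {x y : ℝ} (hx : 0 ≤ x) (hxy : x ≤ y) : Sp p x ≤ Sp p y :=
  Summable.tsum_le_tsum
    (fun n => mul_le_mul_of_nonneg_left (pow_le_pow_left₀ hx hxy n) (aCoef_pos p n).le)
    (summable_a p hx) (summable_a p (le_trans hx hxy))

lemma Tp_mono (hp : 2 ≤ p) {x y : ℝ} (hx : 0 ≤ x) (hxy : x ≤ y) : Tp p x ≤ Tp p y :=
  Summable.tsum_le_tsum
    (fun n => mul_le_mul_of_nonneg_left (pow_le_pow_left₀ hx hxy n) (bCoef_pos hp n).le)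
    (summable_b hp hx) (summable_b hp (le_trans hx hxy))

lemma Sp_zero (p : ℕ) : Sp p 0 = 1 / 2 := by
  rw [Sp, tsum_eq_single 0 (fun n hn => by
    rw [zero_pow hn, mul_zero])]
  simp [aCoef_zero]

lemma Tp_zero (p : ℕ) : Tp p 0 = 1 := by
  rw [Tp, tsum_eq_single 0 (fun n hn => by
    rw [zero_pow hn, mul_zero])]
  simp [bCoef_zero]

lemma P1 (n : ℕ) {a b : ℝ} (hb : 0 ≤ b) (hab : b ≤ a) :
    a ^ (n + 1) - b ^ (n + 1) ≤ ((n : ℝ) + 1) * a ^ n * (a - b) := by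
  have ha : 0 ≤ a := le_trans hb hab
  rw [← geom_sum₂_mul a b (n + 1)]
  apply mul_le_mul_of_nonneg_right ?_ (by linarith)
  calc ∑ i ∈ Finset.range (n + 1), a ^ i * b ^ (n + 1 - 1 - i)
      ≤ ∑ _i ∈ Finset.range (n + 1), a ^ n := by
        apply Finset.sum_le_sum
        intro i hi
        have hi' : i < n + 1 := Finset.mem_range.mp hi
        have hni : n + 1 - 1 - i = n - i := by omega
        rw [hni]
        calc a ^ i * b ^ (n - i) ≤ a ^ i * a ^ (n - i) :=
              mul_le_mul_of_nonneg_left (pow_le_pow_left₀ hb hab _) (by positivity)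
          _ = a ^ n := by rw [← pow_add]; congr 1; omega
    _ = ((n : ℝ) + 1) * a ^ n := by
        rw [Finset.sum_const, Finset.card_range, nsmul_eq_mul]
        push_cast; ring

lemma P2 (n : ℕ) {a b : ℝ} (hb : 0 ≤ b) (hab : b ≤ a) :
    ((n : ℝ) + 1) * b ^ n * (a - b) ≤ a ^ (n + 1) - b ^ (n + 1) := by
  have ha : 0 ≤ a := le_trans hb hab
  rw [← geom_sum₂_mul a b (n + 1)]
  apply mul_le_mul_of_nonneg_right ?_ (by linarith)
  calc ((n : ℝ) + 1) * b ^ n = ∑ _i ∈ Finset.range (n + 1), b ^ n := by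
        rw [Finset.sum_const, Finset.card_range, nsmul_eq_mul]
        push_cast; ring
    _ ≤ ∑ i ∈ Finset.range (n + 1), a ^ i * b ^ (n + 1 - 1 - i) := by
        apply Finset.sum_le_sum
        intro i hi
        have hi' : i < n + 1 := Finset.mem_range.mp hi
        have hni : n + 1 - 1 - i = n - i := by omega
        rw [hni]
        calc b ^ n = b ^ i * b ^ (n - i) := by rw [← pow_add]; congr 1; omega
          _ ≤ a ^ i * b ^ (n - i) :=
              mul_le_mul_of_nonneg_right (pow_le_pow_left₀ hb hab _) (by positivity)

lemma R1 (n K : ℕ) {y : ℝ} (hK : (K : ℝ) ≤ y) :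
    y ^ (n + 1) / ((n : ℝ) + 1) ≤
      (∑ N ∈ Finset.range K, ((N : ℝ) + 1) ^ n) + (y - K) * y ^ n := by
  have hy : 0 ≤ y := le_trans (by positivity) hK
  rw [div_le_iff₀ (by positivity)]
  have tele : ∑ N ∈ Finset.range K, (((N : ℝ) + 1) ^ (n + 1) - ((N : ℝ)) ^ (n + 1)) =
      (K : ℝ) ^ (n + 1) := by
    have h := Finset.sum_range_sub (fun N => ((N : ℝ)) ^ (n + 1)) K
    push_cast at h
    simpa using h
  have h1 : (K : ℝ) ^ (n + 1) ≤ ∑ N ∈ Finset.range K, ((n : ℝ) + 1) * ((N : ℝ) + 1) ^ n := by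
    rw [← tele]
    apply Finset.sum_le_sum
    intro N _
    have h := P1 n (b := (N : ℝ)) (a := (N : ℝ) + 1) (by positivity) (by linarith)
    simpa using h
  have h2 : y ^ (n + 1) - (K : ℝ) ^ (n + 1) ≤ ((n : ℝ) + 1) * y ^ n * (y - K) :=
    P1 n (by positivity) hK
  calc y ^ (n + 1) = (K : ℝ) ^ (n + 1) + (y ^ (n + 1) - (K : ℝ) ^ (n + 1)) := by ring
    _ ≤ (∑ N ∈ Finset.range K, ((n : ℝ) + 1) * ((N : ℝ) + 1) ^ n) +
        ((n : ℝ) + 1) * y ^ n * (y - K) := add_le_add h1 h2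
    _ = ((∑ N ∈ Finset.range K, ((N : ℝ) + 1) ^ n) + (y - K) * y ^ n) * ((n : ℝ) + 1) := by
        rw [← Finset.mul_sum]
        ring

lemma R2 (n K : ℕ) :
    ∑ N ∈ Finset.range K, ((N : ℝ)) ^ n ≤ (K : ℝ) ^ (n + 1) / ((n : ℝ) + 1) := by
  rw [le_div_iff₀ (by positivity)]
  have tele : ∑ N ∈ Finset.range K, (((N : ℝ) + 1) ^ (n + 1) - ((N : ℝ)) ^ (n + 1)) =
      (K : ℝ) ^ (n + 1) := by
    have h := Finset.sum_range_sub (fun N => ((N : ℝ)) ^ (n + 1)) K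
    push_cast at h
    simpa using h
  calc (∑ N ∈ Finset.range K, ((N : ℝ)) ^ n) * ((n : ℝ) + 1)
      = ∑ N ∈ Finset.range K, ((n : ℝ) + 1) * ((N : ℝ)) ^ n := by
        rw [Finset.sum_mul]; exact Finset.sum_congr rfl fun N _ => by ring
    _ ≤ ∑ N ∈ Finset.range K, (((N : ℝ) + 1) ^ (n + 1) - ((N : ℝ)) ^ (n + 1)) := by
        apply Finset.sum_le_sum
        intro N _
        have h := P2 n (b := (N : ℝ)) (a := (N : ℝ) + 1) (by positivity) (by linarith)
        simpa using h
    _ = (K : ℝ) ^ (n + 1) := tele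

lemma ISp_le (p K : ℕ) {y : ℝ} (hK : (K : ℝ) ≤ y) :
    (∑' n : ℕ, aCoef p n * y ^ (n + 1) / ((n : ℝ) + 1)) ≤
      (∑ N ∈ Finset.range K, Sp p ((N : ℝ) + 1)) + (y - K) * Sp p y := by
  have hy : 0 ≤ y := le_trans (by positivity) hK
  have hsum1 : ∀ N : ℕ, N ∈ Finset.range K → Summable (fun n => aCoef p n * ((N : ℝ) + 1) ^ n) :=
    fun N _ => summable_a p (by positivity)
  have hsum2 : Summable (fun n => (y - (K:ℝ)) * (aCoef p n * y ^ n)) :=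
    (summable_a p hy).mul_left _
  have hterm : ∀ n : ℕ, aCoef p n * y ^ (n + 1) / ((n : ℝ) + 1) ≤
      (∑ N ∈ Finset.range K, aCoef p n * ((N : ℝ) + 1) ^ n) +
        (y - (K:ℝ)) * (aCoef p n * y ^ n) := by
    intro n
    have h := R1 n K hK
    calc aCoef p n * y ^ (n + 1) / ((n : ℝ) + 1)
        = aCoef p n * (y ^ (n + 1) / ((n : ℝ) + 1)) := by ring
      _ ≤ aCoef p n * ((∑ N ∈ Finset.range K, ((N : ℝ) + 1) ^ n) + (y - K) * y ^ n) :=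
          mul_le_mul_of_nonneg_left h (aCoef_pos p n).le
      _ = (∑ N ∈ Finset.range K, aCoef p n * ((N : ℝ) + 1) ^ n) +
            (y - (K:ℝ)) * (aCoef p n * y ^ n) := by
          rw [mul_add, Finset.mul_sum]
          congr 1
          ring
  calc (∑' n : ℕ, aCoef p n * y ^ (n + 1) / ((n : ℝ) + 1))
      ≤ ∑' n : ℕ, ((∑ N ∈ Finset.range K, aCoef p n * ((N : ℝ) + 1) ^ n) +
          (y - (K:ℝ)) * (aCoef p n * y ^ n)) :=
        Summable.tsum_le_tsum hterm (summable_aI p hy) ((summable_sum hsum1).add hsum2)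
    _ = (∑ N ∈ Finset.range K, Sp p ((N : ℝ) + 1)) + (y - K) * Sp p y := by
        rw [Summable.tsum_add (summable_sum hsum1) hsum2, Summable.tsum_finsetSum hsum1, tsum_mul_left]
        rfl

lemma sum_Tp_le (hp : 2 ≤ p) (K : ℕ) :
    ∑ N ∈ Finset.range K, Tp p (N : ℝ) ≤
      ∑' n : ℕ, bCoef p n * (K : ℝ) ^ (n + 1) / ((n : ℝ) + 1) := by
  have hsum1 : ∀ N : ℕ, N ∈ Finset.range K → Summable (fun n => bCoef p n * ((N : ℝ)) ^ n) :=
    fun N _ => summable_b hp (by positivity)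
  have hterm : ∀ n : ℕ, (∑ N ∈ Finset.range K, bCoef p n * ((N : ℝ)) ^ n) ≤
      bCoef p n * (K : ℝ) ^ (n + 1) / ((n : ℝ) + 1) := by
    intro n
    calc (∑ N ∈ Finset.range K, bCoef p n * ((N : ℝ)) ^ n)
        = bCoef p n * ∑ N ∈ Finset.range K, ((N : ℝ)) ^ n := by rw [Finset.mul_sum]
      _ ≤ bCoef p n * ((K : ℝ) ^ (n + 1) / ((n : ℝ) + 1)) :=
          mul_le_mul_of_nonneg_left (R2 n K) (bCoef_pos hp n).le
      _ = bCoef p n * (K : ℝ) ^ (n + 1) / ((n : ℝ) + 1) := by ring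
  calc ∑ N ∈ Finset.range K, Tp p (N : ℝ)
      = ∑' n : ℕ, ∑ N ∈ Finset.range K, bCoef p n * ((N : ℝ)) ^ n := by
        rw [Summable.tsum_finsetSum hsum1]; rfl
    _ ≤ ∑' n : ℕ, bCoef p n * (K : ℝ) ^ (n + 1) / ((n : ℝ) + 1) :=
        Summable.tsum_le_tsum hterm (summable_sum hsum1) (summable_bI hp (by positivity))

lemma lower_key (p d : ℕ) (hd : 1 ≤ d) :
    Sp p (d : ℝ) ≤ 1 + ∑ N ∈ Finset.range (d / (p + 1)), Sp p ((N : ℝ) + 1) := by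
  set K := d / (p + 1) with hKdef
  set y : ℝ := (d : ℝ) / ((p : ℝ) + 1) with hy
  have hp1 : (0:ℝ) < (p : ℝ) + 1 := by positivity
  have hxy : ((p : ℝ) + 1) * y = (d : ℝ) := by rw [hy]; field_simp
  have hy0 : 0 ≤ y := by positivity
  have hKy : (K : ℝ) ≤ y := by
    rw [hy, hKdef]
    calc ((d / (p + 1) : ℕ) : ℝ) ≤ (d : ℝ) / ((p + 1 : ℕ) : ℝ) := Nat.cast_div_le
      _ = (d : ℝ) / ((p : ℝ) + 1) := by push_cast; ring
  have hyK1 : y ≤ (K : ℝ) + 1 := by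
    have h := Nat.lt_mul_div_succ d (show 0 < p + 1 by omega)
    have h2 : (d : ℝ) < ((p : ℝ) + 1) * ((K : ℝ) + 1) := by
      rw [hKdef]; exact_mod_cast h
    rw [hy]
    rw [div_le_iff₀ hp1]
    linarith
  have key := Sp_eq p hy0
  rw [hxy] at key
  have hIle := ISp_le p K hKy
  have hSpy := Sp_nonneg p hy0
  have hfin : (y - (K:ℝ)) * Sp p y - Sp p y ≤ 0 := by nlinarith
  rw [key]
  linarith

lemma upper_key (hp : 2 ≤ p) (K d : ℕ) (hKd : p * K ≤ d) :
    Tp p (K : ℝ) + ∑ N ∈ Finset.range K, Tp p (N : ℝ) ≤ Tp p (d : ℝ) := by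
  have h1 := Tp_eq hp (x := (K : ℝ)) (by positivity)
  have h2 := sum_Tp_le hp (p := p) K
  have h3 : Tp p ((p : ℝ) * K) ≤ Tp p (d : ℝ) := by
    apply Tp_mono hp (by positivity)
    exact_mod_cast hKd
  linarith


lemma main (p : ℕ) (hp2 : 2 ≤ p) (d : ℕ) :
    Sp p (d : ℝ) ≤ ((SS p d d).ncard : ℝ) ∧ ((SS p d d).ncard : ℝ) ≤ Tp p (d : ℝ) := by
  induction d using Nat.strong_induction_on with
  | _ d ih =>
    rcases Nat.eq_zero_or_pos d with hd0 | hd1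
    · subst hd0
      rw [ncard_SS_zero p hp2]
      constructor
      · rw [Nat.cast_zero, Sp_zero]; norm_num
      · rw [Nat.cast_zero, Tp_zero]; norm_num
    constructor
    · -- lower bound
      set K := d / (p + 1) with hK
      have hKd : K < d := Nat.div_lt_self hd1 (by omega)
      have h1 : Sp p (d : ℝ) ≤ 1 + ∑ N ∈ Finset.range K, Sp p ((N : ℝ) + 1) :=
        lower_key p d hd1
      have h2 : ∑ N ∈ Finset.range K, Sp p ((N : ℝ) + 1) ≤
          ∑ N ∈ Finset.range K, ((SS p (N + 1) (N + 1)).ncard : ℝ) := by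
        apply Finset.sum_le_sum
        intro N hN
        have hlt : N + 1 < d := by have := Finset.mem_range.mp hN; omega
        have := (ih (N + 1) hlt).1
        have hcast : ((N + 1 : ℕ) : ℝ) = (N : ℝ) + 1 := by push_cast; ring
        rwa [hcast] at this
      have hC := C1 p hp2 d
      rw [← hK, Finset.sum_range_succ', ncard_SS_zero p hp2] at hC
      have h3 : ((∑ N ∈ Finset.range K, (SS p (N + 1) (N + 1)).ncard : ℕ) : ℝ) + 1 ≤
          ((SS p d d).ncard : ℝ) := by exact_mod_cast hC
      rw [Nat.cast_sum] at h3
      linarith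
    · -- upper bound
      set K := d / p with hK
      have hKd : K < d := Nat.div_lt_self hd1 (by omega)
      have hC := C2 p hp2 d
      rw [← hK] at hC
      have h1 : ((SS p d d).ncard : ℝ) ≤
          ∑ N ∈ Finset.range (K + 1), ((SS p N N).ncard : ℝ) := by
        rw [← Nat.cast_sum]
        exact_mod_cast hC
      have h2 : ∑ N ∈ Finset.range (K + 1), ((SS p N N).ncard : ℝ) ≤
          ∑ N ∈ Finset.range (K + 1), Tp p (N : ℝ) := by
        apply Finset.sum_le_sum
        intro N hN
        have hle : N < d := by have := Finset.mem_range.mp hN; omega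
        exact (ih N hle).2
      have h3 : ∑ N ∈ Finset.range (K + 1), Tp p (N : ℝ) =
          Tp p (K : ℝ) + ∑ N ∈ Finset.range K, Tp p (N : ℝ) := by
        rw [Finset.sum_range_succ]; ring
      have h4 : Tp p (K : ℝ) + ∑ N ∈ Finset.range K, Tp p (N : ℝ) ≤ Tp p (d : ℝ) := by
        apply upper_key hp2
        calc p * K = K * p := Nat.mul_comm _ _
          _ ≤ d := hK ▸ Nat.div_mul_le_self d p
      linarith

end Stmt8

/-- `S_p(d) ≤ r_p(d,d) ≤ T_p(d)` for all nonnegative integers `d`. -/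
theorem stmt_8 (p : ℕ) (hp : p.Prime) (d : ℕ) :
    Sp p (d : ℝ) ≤ (rp p (d : ℤ) (d : ℤ) : ℝ) ∧
    (rp p (d : ℤ) (d : ℤ) : ℝ) ≤ Tp p (d : ℝ) := by
  have hp2 : 2 ≤ p := hp.two_le
  have h := Stmt8.main p hp2 d
  rw [Stmt8.rp_eq p d d]
  exact h
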